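/- Let R = ℝ[z, z̄] be the polynomial ring in two commuting formal variables z and z̄, with formal partial derivatives ∂_z, ∂_{z̄}. Define ℝ-linear operators A, B : R → R by A f = 2·z̄·f − (1/π)·∂_z f and B f = 2·z·f − (1/π)·∂_{z̄} f, and for nonnegative integers a, b set F_{a,b} = A^a ( B^b (1) ) ∈ R. Then for all a ≠ b, ∫_ℂ F_{a,b}(z, conj(z)) · e^{−2π|z|²} dλ(z) = 0, where F_{a,b}(z, conj(z)) denotes evaluation of the polynomial at the pair (z, conj z) and λ is Lebesgue measure on ℂ ≅ ℝ². -/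

import Mathlib

open MvPolynomial MeasureTheory

private noncomputable def Sd (d : ℤ) : Submodule ℝ (MvPolynomial (Fin 2) ℝ) :=
  Submodule.span ℝ {p | ∃ j k : ℕ, (j : ℤ) - k = d ∧ p = X 0 ^ j * X 1 ^ k}

private lemma mono_mem {j k : ℕ} {d : ℤ} (h : (j : ℤ) - k = d) :
    (X 0 ^ j * X 1 ^ k : MvPolynomial (Fin 2) ℝ) ∈ Sd d :=
  Submodule.subset_span ⟨j, k, h, rfl⟩

private lemma stepB {d : ℤ} {p : MvPolynomial (Fin 2) ℝ} (hp : p ∈ Sd d) :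
    2 * X 0 * p - C (1 / Real.pi) * pderiv 1 p ∈ Sd (d + 1) := by
  induction hp using Submodule.span_induction with
  | mem q hq =>
    obtain ⟨j, k, hjk, rfl⟩ := hq
    cases k with
    | zero =>
      have he : (2 * X 0 * (X 0 ^ j * X 1 ^ 0) - C (1 / Real.pi) * pderiv 1 (X 0 ^ j * X 1 ^ 0)
          : MvPolynomial (Fin 2) ℝ) = (2 : ℝ) • (X 0 ^ (j+1) * X 1 ^ 0) := by
        simp [pderiv_mul, pderiv_pow, pderiv_X_self, pderiv_X_of_ne, smul_eq_C_mul, map_ofNat]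
        ring
      rw [he]
      exact Submodule.smul_mem _ _ (mono_mem (by omega))
    | succ k =>
      have he : (2 * X 0 * (X 0 ^ j * X 1 ^ (k+1))
            - C (1 / Real.pi) * pderiv 1 (X 0 ^ j * X 1 ^ (k+1)) : MvPolynomial (Fin 2) ℝ)
          = (2 : ℝ) • (X 0 ^ (j+1) * X 1 ^ (k+1))
            - (((k:ℝ)+1) * (1/Real.pi)) • (X 0 ^ j * X 1 ^ k) := by
        simp [pderiv_mul, pderiv_pow, pderiv_X_self, pderiv_X_of_ne, smul_eq_C_mul, C_mul,
          map_ofNat]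
        push_cast
        ring
      rw [he]
      exact Submodule.sub_mem _ (Submodule.smul_mem _ _ (mono_mem (by push_cast; omega)))
        (Submodule.smul_mem _ _ (mono_mem (by omega)))
  | zero => simpa using Submodule.zero_mem (Sd (d+1))
  | add x y hx hy ihx ihy =>
    have he : 2 * X 0 * (x + y) - C (1 / Real.pi) * pderiv 1 (x + y)
        = (2 * X 0 * x - C (1 / Real.pi) * pderiv 1 x)
          + (2 * X 0 * y - C (1 / Real.pi) * pderiv 1 y) := by
      rw [map_add]; ring
    rw [he]; exact Submodule.add_mem _ ihx ihy
  | smul r x hx ihx =>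
    have he : 2 * X 0 * (r • x) - C (1 / Real.pi) * pderiv 1 (r • x)
        = r • (2 * X 0 * x - C (1 / Real.pi) * pderiv 1 x) := by
      rw [Derivation.map_smul, smul_eq_C_mul, smul_eq_C_mul, smul_eq_C_mul]; ring
    rw [he]; exact Submodule.smul_mem _ _ ihx

private lemma stepA {d : ℤ} {p : MvPolynomial (Fin 2) ℝ} (hp : p ∈ Sd d) :
    2 * X 1 * p - C (1 / Real.pi) * pderiv 0 p ∈ Sd (d - 1) := by
  induction hp using Submodule.span_induction with
  | mem q hq =>
    obtain ⟨j, k, hjk, rfl⟩ := hq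
    cases j with
    | zero =>
      have he : (2 * X 1 * (X 0 ^ 0 * X 1 ^ k) - C (1 / Real.pi) * pderiv 0 (X 0 ^ 0 * X 1 ^ k)
          : MvPolynomial (Fin 2) ℝ) = (2 : ℝ) • (X 0 ^ 0 * X 1 ^ (k+1)) := by
        simp [pderiv_mul, pderiv_pow, pderiv_X_self, pderiv_X_of_ne, smul_eq_C_mul, map_ofNat]
        ring
      rw [he]
      exact Submodule.smul_mem _ _ (mono_mem (by omega))
    | succ j =>
      have he : (2 * X 1 * (X 0 ^ (j+1) * X 1 ^ k)
            - C (1 / Real.pi) * pderiv 0 (X 0 ^ (j+1) * X 1 ^ k) : MvPolynomial (Fin 2) ℝ)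
          = (2 : ℝ) • (X 0 ^ (j+1) * X 1 ^ (k+1))
            - (((j:ℝ)+1) * (1/Real.pi)) • (X 0 ^ j * X 1 ^ k) := by
        simp [pderiv_mul, pderiv_pow, pderiv_X_self, pderiv_X_of_ne, smul_eq_C_mul, C_mul,
          map_ofNat]
        push_cast
        ring
      rw [he]
      exact Submodule.sub_mem _ (Submodule.smul_mem _ _ (mono_mem (by push_cast; omega)))
        (Submodule.smul_mem _ _ (mono_mem (by omega)))
  | zero => simpa using Submodule.zero_mem (Sd (d-1))
  | add x y hx hy ihx ihy =>
    have he : 2 * X 1 * (x + y) - C (1 / Real.pi) * pderiv 0 (x + y)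
        = (2 * X 1 * x - C (1 / Real.pi) * pderiv 0 x)
          + (2 * X 1 * y - C (1 / Real.pi) * pderiv 0 y) := by
      rw [map_add]; ring
    rw [he]; exact Submodule.add_mem _ ihx ihy
  | smul r x hx ihx =>
    have he : 2 * X 1 * (r • x) - C (1 / Real.pi) * pderiv 0 (r • x)
        = r • (2 * X 1 * x - C (1 / Real.pi) * pderiv 0 x) := by
      rw [Derivation.map_smul, smul_eq_C_mul, smul_eq_C_mul, smul_eq_C_mul]; ring
    rw [he]; exact Submodule.smul_mem _ _ ihx

private lemma eval_hom {d : ℤ} {p : MvPolynomial (Fin 2) ℝ} (hp : p ∈ Sd d)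
    (ω z : ℂ) (hω : ‖ω‖ = 1) :
    (aeval ![ω * z, starRingEnd ℂ (ω * z)] p : ℂ)
      = ω ^ d * aeval ![z, starRingEnd ℂ z] p := by
  have hω0 : ω ≠ 0 := by
    intro h; rw [h] at hω; simp at hω
  induction hp using Submodule.span_induction with
  | mem q hq =>
    obtain ⟨j, k, hjk, rfl⟩ := hq
    simp only [map_mul, map_pow, aeval_X, Matrix.cons_val_zero, Matrix.cons_val_one,
      Matrix.head_cons]
    rw [← Complex.inv_eq_conj hω, ← hjk, zpow_sub₀ hω0, zpow_natCast, zpow_natCast]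
    field_simp
    rw [div_pow, mul_assoc, div_mul_cancel₀ _ (pow_ne_zero _ hω0)]; ring
  | zero => simp
  | add x y hx hy ihx ihy => simp only [map_add, ihx, ihy]; ring
  | smul r x hx ihx =>
    rw [_root_.map_smul, _root_.map_smul, ihx, Complex.real_smul, Complex.real_smul]; ring

/-- With `A f = 2z̄f − π⁻¹∂_z f` and `B f = 2zf − π⁻¹∂_{z̄} f` on `ℝ[z, z̄]`
(variable `0` is `z`, variable `1` is `z̄`) and `F_{a,b} = A^a(B^b 1)`, for `a ≠ b`
the integral `∫_ℂ F_{a,b}(z, z̄) e^{−2π|z|²} dλ(z)` vanishes. -/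
theorem stmt_10 (A B : MvPolynomial (Fin 2) ℝ → MvPolynomial (Fin 2) ℝ)
    (hA : ∀ f, A f = 2 * X 1 * f - C (1 / Real.pi) * pderiv 0 f)
    (hB : ∀ f, B f = 2 * X 0 * f - C (1 / Real.pi) * pderiv 1 f)
    (a b : ℕ) (hab : a ≠ b) :
    ∫ z : ℂ, (aeval ![z, starRingEnd ℂ z] (A^[a] (B^[b] 1)) : ℂ) *
      Complex.exp (-(2 * (Real.pi : ℂ) * ((‖z‖ : ℝ) : ℂ) ^ 2)) = 0 := by
  -- the polynomial lies in `Sd (b - a)`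
  have hBiter : ∀ n : ℕ, B^[n] 1 ∈ Sd n := by
    intro n
    induction n with
    | zero =>
      simpa using mono_mem (j := 0) (k := 0) (d := 0) (by norm_num)
    | succ n ih =>
      rw [Function.iterate_succ_apply', hB]
      exact_mod_cast stepB ih
  have hF : A^[a] (B^[b] 1) ∈ Sd ((b : ℤ) - a) := by
    have : ∀ (n : ℕ) (d : ℤ) (p : MvPolynomial (Fin 2) ℝ), p ∈ Sd d → A^[n] p ∈ Sd (d - n) := by
      intro n
      induction n with
      | zero => intro d p hp; simpa using hp
      | succ n ih =>
        intro d p hp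
        rw [Function.iterate_succ_apply', hA]
        have := stepA (ih d p hp)
        convert this using 2
        push_cast; ring
    exact this a b _ (hBiter b)
  set d : ℤ := (b : ℤ) - a with hd
  have hd0 : d ≠ 0 := by
    rw [hd]; intro h; exact hab (by omega)
  -- rotation
  set ω : ℂ := Complex.exp ((Real.pi / d : ℝ) * Complex.I) with hωdef
  have hω : ‖ω‖ = 1 := Complex.norm_exp_ofReal_mul_I _
  have hωd : ω ^ d = -1 := by
    rw [hωdef, ← Complex.exp_int_mul]
    have : (d : ℂ) * (((Real.pi / d : ℝ) : ℂ) * Complex.I) = Real.pi * Complex.I := by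
      have hdC : (d : ℂ) ≠ 0 := Int.cast_ne_zero.mpr hd0
      push_cast
      field_simp
    rw [this, Complex.exp_pi_mul_I]
  set g : ℂ → ℂ := fun z => (aeval ![z, starRingEnd ℂ z] (A^[a] (B^[b] 1)) : ℂ) *
      Complex.exp (-(2 * (Real.pi : ℂ) * ((‖z‖ : ℝ) : ℂ) ^ 2)) with hg
  set c : Circle := ⟨ω, by simp [Circle, Submonoid.unitSphere, mem_sphere_zero_iff_norm,
    hω]⟩ with hc
  have hrot : MeasurePreserving (rotation c) volume volume :=
    (rotation c).measurePreserving
  have hcomp : ∫ z : ℂ, g (rotation c z) = ∫ z : ℂ, g z :=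
    hrot.integral_comp (rotation c).toHomeomorph.measurableEmbedding g
  have hscale : ∀ z : ℂ, g (rotation c z) = ω ^ d * g z := by
    intro z
    have h1 : rotation c z = ω * z := by rw [rotation_apply, hc]
    rw [h1, hg]
    simp only
    rw [eval_hom hF ω z hω]
    have h2 : ‖ω * z‖ = ‖z‖ := by
      rw [norm_mul, hω, one_mul]
    rw [h2]
    ring
  have : ∫ z : ℂ, g z = ω ^ d * ∫ z : ℂ, g z := by
    conv_lhs => rw [← hcomp]
    simp_rw [hscale]
    rw [integral_const_mul]
  rw [hωd] at this
  have h2 : (2 : ℂ) * ∫ z : ℂ, g z = 0 := by linear_combination this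
  rcases mul_eq_zero.mp h2 with h | h
  · norm_num at h
  · exact h
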